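/- Let r, r' be natural numbers and R = ℤ[h,ξ]/(h^{r+1}, ξ·(ξ−h)^{r'+1}). Then for all integers i, j with 0 ≤ i ≤ r' and j ≥ r'+1, the following identity holds in R: ∑_{m=0}^{r'−i} (−1)^m · binomial(j−i, m) · ξ^{j−i−m} · (ξ−h)^{i+m} = h^{j−i}·(ξ−h)^i + (−1)^{r'−i} · h^{j−r'−1}·(ξ−h)^{r'+1}. -/
import Mathlib


open MvPolynomial

/-- The ideal `(h^(r+1), ξ·(ξ−h)^(r'+1))` in `ℤ[h,ξ]`, with `h = X 0`, `ξ = X 1`. -/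
noncomputable def flipIdeal (r r' : ℕ) : Ideal (MvPolynomial (Fin 2) ℤ) :=
  Ideal.span {(X 0 : MvPolynomial (Fin 2) ℤ) ^ (r + 1),
              (X 1 : MvPolynomial (Fin 2) ℤ) * ((X 1 : MvPolynomial (Fin 2) ℤ) - X 0) ^ (r' + 1)}

/-- The ring `R = ℤ[h,ξ]/(h^(r+1), ξ·(ξ−h)^(r'+1))`. -/
abbrev FlipRing (r r' : ℕ) : Type :=
  MvPolynomial (Fin 2) ℤ ⧸ flipIdeal r r'

/-- The image of `h` in `R`. -/
noncomputable def hcl (r r' : ℕ) : FlipRing r r' :=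
  Ideal.Quotient.mk (flipIdeal r r') (X 0)

/-- The image of `ξ` in `R`. -/
noncomputable def xcl (r r' : ℕ) : FlipRing r r' :=
  Ideal.Quotient.mk (flipIdeal r r') (X 1)

lemma flip_key (r r' : ℕ) : xcl r r' * (xcl r r' - hcl r r') ^ (r' + 1) = 0 := by
  have : xcl r r' * (xcl r r' - hcl r r') ^ (r' + 1) =
      Ideal.Quotient.mk (flipIdeal r r')
        ((X 1 : MvPolynomial (Fin 2) ℤ) * ((X 1 : MvPolynomial (Fin 2) ℤ) - X 0) ^ (r' + 1)) := by
    simp [xcl, hcl, map_mul, map_pow, map_sub]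
  rw [this, Ideal.Quotient.eq_zero_iff_mem]
  exact Ideal.subset_span (by simp)

/-- `x^(a+1) * e^(r'+1+b) = 0` in `R`. -/
lemma flip_zero (r r' a b : ℕ) :
    xcl r r' ^ (a + 1) * (xcl r r' - hcl r r') ^ (r' + 1 + b) = 0 := by
  have : xcl r r' ^ (a + 1) * (xcl r r' - hcl r r') ^ (r' + 1 + b) =
      (xcl r r' * (xcl r r' - hcl r r') ^ (r' + 1)) *
        (xcl r r' ^ a * (xcl r r' - hcl r r') ^ b) := by
    ring
  rw [this, flip_key, zero_mul]

/-- `e^(r'+1+t) = (-1)^t h^t e^(r'+1)` in `R`. -/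
lemma flip_e_pow (r r' t : ℕ) :
    (xcl r r' - hcl r r') ^ (r' + 1 + t) =
      (-1 : FlipRing r r') ^ t * hcl r r' ^ t * (xcl r r' - hcl r r') ^ (r' + 1) := by
  induction t with
  | zero => simp
  | succ t ih =>
    have h1 : (xcl r r' - hcl r r') ^ (r' + 1 + (t + 1)) =
        (xcl r r' - hcl r r') * (xcl r r' - hcl r r') ^ (r' + 1 + t) := by
      rw [← pow_succ']
      rfl
    have h2 : xcl r r' * (xcl r r' - hcl r r') ^ (r' + 1 + t) = 0 := by
      have := flip_zero r r' 0 t; simpa using this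
    rw [h1, sub_mul, h2, zero_sub, ih]
    ring

/-- The full binomial expansion: `∑_{m=0}^{n} (-1)^m C(n,m) x^{n-m} e^{i+m} = e^i h^n`. -/
lemma flip_full_sum (r r' i n : ℕ) :
    ∑ m ∈ Finset.range (n + 1),
        (-1 : FlipRing r r') ^ m * (n.choose m : FlipRing r r') *
          (xcl r r' ^ (n - m) * (xcl r r' - hcl r r') ^ (i + m)) =
      (xcl r r' - hcl r r') ^ i * hcl r r' ^ n := by
  have h1 := sub_pow (xcl r r') (xcl r r' - hcl r r') n
  rw [sub_sub_cancel] at h1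
  rw [h1, Finset.mul_sum, ← Finset.sum_range_reflect]
  apply Finset.sum_congr rfl
  intro m hm
  rw [Finset.mem_range] at hm
  have hmn : m ≤ n := Nat.lt_succ_iff.mp hm
  have h1 : n + 1 - 1 - m = n - m := by omega
  rw [h1, Nat.sub_sub_self hmn, Nat.choose_symm hmn]
  have h3 : ((-1 : FlipRing r r') ^ (n - m)) = (-1) ^ (m + n) := by
    have h4 : m + n = (n - m) + 2 * m := by omega
    rw [h4, pow_add, pow_mul]
    norm_num
  rw [h3, pow_add]
  ring

set_option maxHeartbeats 1000000 in
/-- in `R = ℤ[h,ξ]/(h^(r+1), ξ·(ξ−h)^(r'+1))`, for `0 ≤ i ≤ r'` and `j ≥ r'+1`,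
`∑_{m=0}^{r'−i} (−1)^m·C(j−i,m)·ξ^(j−i−m)·(ξ−h)^(i+m)
   = h^(j−i)·(ξ−h)^i + (−1)^(r'−i)·h^(j−r'−1)·(ξ−h)^(r'+1)`. -/
theorem flipRing_Psi_image_formula (r r' : ℕ) (i j : ℕ) (hi : i ≤ r') (hj : r' + 1 ≤ j) :
    ∑ m ∈ Finset.range (r' - i + 1),
        (-1 : FlipRing r r') ^ m * ((j - i).choose m : FlipRing r r') *
          (xcl r r' ^ (j - i - m) * (xcl r r' - hcl r r') ^ (i + m)) =
      hcl r r' ^ (j - i) * (xcl r r' - hcl r r') ^ i +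
        (-1 : FlipRing r r') ^ (r' - i) *
          (hcl r r' ^ (j - r' - 1) * (xcl r r' - hcl r r') ^ (r' + 1)) := by
  obtain ⟨t, rfl⟩ : ∃ t, j = r' + 1 + t := ⟨j - (r' + 1), by omega⟩
  obtain ⟨d, rfl⟩ : ∃ d, r' = i + d := ⟨r' - i, by omega⟩
  set x := xcl r (i + d)
  set h := hcl r (i + d)
  set e := x - h
  have hd : i + d - i = d := by omega
  have hn : (i + d + 1 + t) - i = d + 1 + t := by omega
  have ht : (i + d + 1 + t) - (i + d) - 1 = t := by omega
  set n := d + 1 + t with hn'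
  rw [hd, hn, ht]
  -- the function being summed
  set f : ℕ → FlipRing r (i + d) := fun m =>
    (-1 : FlipRing r (i + d)) ^ m * (n.choose m : FlipRing r (i + d)) *
      (x ^ (n - m) * e ^ (i + m)) with hf
  have hfull : ∑ m ∈ Finset.range (n + 1), f m = e ^ i * h ^ n :=
    flip_full_sum r (i + d) i n
  have hsplit : ∑ m ∈ Finset.range (d + 1), f m + ∑ m ∈ Finset.Ico (d + 1) (n + 1), f m =
      ∑ m ∈ Finset.range (n + 1), f m :=
    Finset.sum_range_add_sum_Ico f (by omega)
  have htail : ∑ m ∈ Finset.Ico (d + 1) (n + 1), f m = f n := by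
    apply Finset.sum_eq_single_of_mem
    · simp [Finset.mem_Ico]; omega
    · intro m hm hmn
      rw [Finset.mem_Ico] at hm
      have h1 : n - m = (n - m - 1) + 1 := by omega
      have h2 : i + m = (i + d + 1) + (m - d - 1) := by omega
      rw [hf]
      simp only
      rw [h1, h2, flip_zero r (i + d) (n - m - 1) (m - d - 1), mul_zero]
  have hfn : f n = (-1 : FlipRing r (i + d)) ^ n * e ^ (i + n) := by
    simp only [hf, Nat.choose_self, Nat.sub_self, pow_zero, Nat.cast_one, mul_one, one_mul]
  have hein : e ^ (i + n) = (-1 : FlipRing r (i + d)) ^ t * h ^ t * e ^ (i + d + 1) := by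
    have : i + n = (i + d + 1) + t := by omega
    rw [this]
    exact flip_e_pow r (i + d) t
  have : ∑ m ∈ Finset.range (d + 1), f m = e ^ i * h ^ n - f n := by
    rw [← hfull, ← hsplit, htail]; ring
  rw [this, hfn, hein]
  have hpar : (-1 : FlipRing r (i + d)) ^ n * (-1 : FlipRing r (i + d)) ^ t =
      -(-1 : FlipRing r (i + d)) ^ d := by
    rw [← pow_add]
    have : n + t = d + 2 * t + 1 := by omega
    rw [this, pow_succ, pow_add, pow_mul]
    ring
  calc e ^ i * h ^ n - (-1 : FlipRing r (i + d)) ^ n *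
        ((-1 : FlipRing r (i + d)) ^ t * h ^ t * e ^ (i + d + 1))
      = e ^ i * h ^ n -
        ((-1 : FlipRing r (i + d)) ^ n * (-1 : FlipRing r (i + d)) ^ t) *
          (h ^ t * e ^ (i + d + 1)) := by ring
    _ = h ^ n * e ^ i + (-1 : FlipRing r (i + d)) ^ d * (h ^ t * e ^ (i + d + 1)) := by
        rw [hpar]; ring
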